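/- (Monotonicity lemma) Let β > 0, μ ∈ ℝ, f(a) = (1/a) ln((1+a)/(1−a)) for 0 ≤ a < 1 (f(0)=2), and γ₀(p) = 1/(e^{β(p²−μ)}+1). Suppose γ : ℝ³ → [0,1] and α̂ : ℝ³ → ℂ satisfy, at a point p with p² ≠ μ and (γ(p)−1/2)² + |α̂(p)|² < 1/4, the equation p²−μ = −((2γ(p)−1)/β) f(2√((γ(p)−1/2)² + |α̂(p)|²)). If α̂(p) ≠ 0, then γ(p) < γ₀(p) when p² < μ, and γ(p) > γ₀(p) when p² > μ. -/

import Mathlib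

open Real

noncomputable def Lf (x : ℝ) : ℝ := Real.log ((1 + x) / (1 - x))

lemma Lf_mono {x y : ℝ} (hx : -1 < x) (hxy : x < y) (hy : y < 1) : Lf x < Lf y := by
  have h1 : (0:ℝ) < 1 + x := by linarith
  have h2 : (0:ℝ) < 1 - y := by linarith
  have h3 : (0:ℝ) < 1 - x := by linarith
  have h4 : (0:ℝ) < 1 + y := by linarith
  apply Real.log_lt_log (by positivity)
  rw [div_lt_div_iff₀ h3 h2]
  nlinarith

lemma Lf_strictConvex : StrictConvexOn ℝ (Set.Ico (0:ℝ) 1) Lf := by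
  have hG : ∀ x ∈ Set.Ico (0:ℝ) 1, Lf x = Real.log (1 + x) - Real.log (1 - x) := by
    intro x hx
    have h1 : (1:ℝ) + x ≠ 0 := by simp at hx; linarith [hx.1]
    have h2 : (1:ℝ) - x ≠ 0 := by simp at hx; linarith [hx.2]
    simp [Lf, Real.log_div h1 h2]
  set G : ℝ → ℝ := fun x => Real.log (1 + x) - Real.log (1 - x) with hGdef
  have hd1 : ∀ x ∈ Set.Ioo (-1:ℝ) 1, HasDerivAt G ((1+x)⁻¹ + (1-x)⁻¹) x := by
    intro x hx
    have h1 : (1:ℝ) + x ≠ 0 := by simp at hx; nlinarith [hx.1]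
    have h2 : (1:ℝ) - x ≠ 0 := by simp at hx; nlinarith [hx.2]
    have d1 : HasDerivAt (fun x : ℝ => 1 + x) 1 x := (hasDerivAt_id x).const_add 1
    have d2 : HasDerivAt (fun x : ℝ => 1 - x) (-1) x := (hasDerivAt_id x).const_sub 1
    have := (d1.log h1).sub (d2.log h2)
    exact this.congr_deriv (by ring)
  have hderivG : ∀ x ∈ Set.Ioo (-1:ℝ) 1, deriv G x = (1+x)⁻¹ + (1-x)⁻¹ := fun x hx =>
    (hd1 x hx).deriv
  have key : StrictConvexOn ℝ (Set.Ico (0:ℝ) 1) G := by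
    apply strictConvexOn_of_deriv2_pos (convex_Ico 0 1)
    · apply ContinuousOn.sub
      · apply Real.continuousOn_log.comp (by fun_prop)
        intro x hx; simp at hx ⊢; nlinarith [hx.1]
      · apply Real.continuousOn_log.comp (by fun_prop)
        intro x hx; simp at hx ⊢; nlinarith [hx.2]
    · intro x hx
      rw [interior_Ico] at hx
      obtain ⟨hx0, hx1⟩ := hx
      have hmem : x ∈ Set.Ioo (-1:ℝ) 1 := ⟨by linarith, hx1⟩
      have heq : Set.EqOn (deriv G) (fun y => (1+y)⁻¹ + (1-y)⁻¹) (Set.Ioo (-1:ℝ) 1) := by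
        intro y hy; exact hderivG y hy
      have hd2 : HasDerivAt (fun y : ℝ => (1+y)⁻¹ + (1-y)⁻¹)
          (-(1/(1+x)^2) + 1/(1-x)^2) x := by
        have h1 : (1:ℝ) + x ≠ 0 := by nlinarith
        have h2 : (1:ℝ) - x ≠ 0 := by nlinarith
        have d1 : HasDerivAt (fun y : ℝ => 1 + y) 1 x := (hasDerivAt_id x).const_add 1
        have d2 : HasDerivAt (fun y : ℝ => 1 - y) (-1) x := (hasDerivAt_id x).const_sub 1
        have := (d1.inv h1).add (d2.inv h2)
        exact this.congr_deriv (by ring)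
      have hd2' : deriv (deriv G) x = -(1/(1+x)^2) + 1/(1-x)^2 := by
        have : deriv G =ᶠ[nhds x] (fun y => (1+y)⁻¹ + (1-y)⁻¹) :=
          Filter.eventuallyEq_of_mem (isOpen_Ioo.mem_nhds hmem) heq
        rw [this.deriv_eq]
        exact hd2.deriv
      simp only [Function.iterate_succ, Function.iterate_zero, Function.comp, id]
      rw [hd2']
      have h2 : (0:ℝ) < 1 - x := by linarith
      have : (1 - x)^2 < (1 + x)^2 := by nlinarith
      have l1 : 1/(1+x)^2 < 1/(1-x)^2 := by
        apply one_div_lt_one_div_of_lt (by positivity) this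
      linarith
  exact key.congr (fun x hx => (hG x hx).symm)

lemma Lf_key {t u : ℝ} (ht : 0 < t) (htu : t < u) (hu : u < 1) : u * Lf t < t * Lf u := by
  have h0 : (0:ℝ) ∈ Set.Ico (0:ℝ) 1 := by constructor <;> norm_num
  have htm : t ∈ Set.Ico (0:ℝ) 1 := ⟨le_of_lt ht, by linarith⟩
  have hum : u ∈ Set.Ico (0:ℝ) 1 := ⟨by linarith, hu⟩
  have := Lf_strictConvex.secant_strict_mono h0 htm hum (ne_of_gt ht) (by linarith : (0:ℝ) < u).ne' htu
  have hL0 : Lf 0 = 0 := by simp [Lf]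
  rw [hL0] at this
  simp only [sub_zero] at this
  rw [div_lt_div_iff₀ ht (by linarith)] at this
  linarith

/-- `f(a) = (1/a)·ln((1+a)/(1−a))` for `a ∈ (0,1)`, with `f(0) = 2`. -/
noncomputable def fBCS (a : ℝ) : ℝ :=
  if a = 0 then 2 else (1 / a) * Real.log ((1 + a) / (1 - a))

/-- The normal state `γ₀(p) = (e^{β(p²−μ)}+1)^{-1}`. -/
noncomputable def gamma0 (β μ : ℝ) (p : EuclideanSpace ℝ (Fin 3)) : ℝ :=
  1 / (Real.exp (β * (‖p‖ ^ 2 - μ)) + 1)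

/-- Monotonicity lemma: a solution of the Euler–Lagrange equation for `γ` with
`α̂(p) ≠ 0` satisfies `γ(p) < γ₀(p)` for `p² < μ` and `γ(p) > γ₀(p)` for `p² > μ`. -/
theorem gamma_monotone (β μ : ℝ) (hβ : 0 < β)
    (γ : EuclideanSpace ℝ (Fin 3) → ℝ) (αh : EuclideanSpace ℝ (Fin 3) → ℂ)
    (p : EuclideanSpace ℝ (Fin 3)) (hp : ‖p‖ ^ 2 ≠ μ)
    (hγ0 : 0 ≤ γ p) (hγ1 : γ p ≤ 1)
    (hin : (γ p - 1 / 2) ^ 2 + ‖αh p‖ ^ 2 < 1 / 4)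
    (heq : ‖p‖ ^ 2 - μ =
      -((2 * γ p - 1) / β) * fBCS (2 * Real.sqrt ((γ p - 1 / 2) ^ 2 + ‖αh p‖ ^ 2)))
    (hα : αh p ≠ 0) :
    (‖p‖ ^ 2 < μ → γ p < gamma0 β μ p) ∧ (μ < ‖p‖ ^ 2 → gamma0 β μ p < γ p) := by
  have ha : 0 < ‖αh p‖ := norm_pos_iff.mpr hα
  set g : ℝ := γ p with hgdef
  set E : ℝ := ‖p‖ ^ 2 - μ with hEdef
  set A : ℝ := (g - 1/2)^2 + ‖αh p‖^2 with hAdef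
  have hApos : 0 < A := by positivity
  set s : ℝ := Real.sqrt A with hsdef
  clear_value g E A s
  have hs : 0 < s := by rw [hsdef]; exact Real.sqrt_pos.mpr hApos
  have hs2 : s^2 = A := by rw [hsdef]; exact Real.sq_sqrt hApos.le
  have hu1 : 2 * s < 1 := by nlinarith [hs, hs2, hin, sq_nonneg (2*s-1)]
  set T : ℝ := 2 * g - 1 with hTdef
  clear_value T
  have hT2 : T^2 < (2*s)^2 := by rw [hTdef]; nlinarith [hs2, hAdef, mul_pos ha ha]
  have habs1 : -(2*s) < T := by nlinarith
  have habs2 : T < 2*s := by nlinarith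
  -- rewrite the equation
  have hfB : fBCS (2*s) = (1/(2*s)) * Lf (2*s) := by
    rw [fBCS, if_neg (by positivity : (2*s:ℝ) ≠ 0)]; rfl
  rw [hfB] at heq
  have hE : T * Lf (2*s) = -(β * E) * (2*s) := by
    field_simp at heq
    nlinarith [heq]
  clear heq hfB
  -- the normal state
  set c : ℝ := Real.exp (β * E) with hcdef
  clear_value c
  have hc : 0 < c := by rw [hcdef]; exact Real.exp_pos _
  have hg0 : gamma0 β μ p = 1/(c+1) := by simp only [gamma0, hcdef, hEdef]
  set g0 : ℝ := gamma0 β μ p with hg0def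
  clear_value g0
  have hg0pos : 0 < g0 := by rw [hg0]; positivity
  have hg0lt : g0 < 1 := by
    rw [hg0, div_lt_one (by positivity)]; linarith
  set T0 : ℝ := 2 * g0 - 1 with hT0def
  clear_value T0
  have hT0mem : -1 < T0 ∧ T0 < 1 := ⟨by simp [hT0def]; linarith, by simp [hT0def]; linarith⟩
  have hL0 : Lf T0 = -(β * E) := by
    have h1 : (1 + T0)/(1 - T0) = c⁻¹ := by
      rw [hT0def, hg0]
      field_simp [hc.ne']
      rw [show c + 1 - (2 - (c + 1)) = 2*c by ring, show c * (c + 1 + (2 - (c + 1))) = 2*c by ring]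
      exact div_self (by positivity)
    rw [Lf, h1, Real.log_inv, hcdef, Real.log_exp]
  have hLu : 0 < Lf (2*s) := by
    rw [Lf]
    apply Real.log_pos
    rw [lt_div_iff₀ (by linarith : (0:ℝ) < 1 - 2*s)]
    linarith
  have hgoal1 : ‖p‖^2 < μ ↔ E < 0 := by rw [hEdef]; exact sub_neg.symm
  have hgoal2 : μ < ‖p‖^2 ↔ 0 < E := by rw [hEdef]; exact sub_pos.symm
  rw [hgoal1, hgoal2]
  clear hgoal1 hgoal2 hgdef hg0def hEdef hAdef hp hα ha
  clear αh γ p μ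
  constructor
  · intro hEneg
    have hβE : 0 < -(β * E) := neg_pos.mpr (mul_neg_of_pos_of_neg hβ hEneg)
    have hTpos : 0 < T := by
      by_contra h
      push_neg at h
      have h1 : T * Lf (2*s) ≤ 0 := mul_nonpos_iff.mpr (Or.inr ⟨h, hLu.le⟩)
      have h2 : 0 < -(β*E) * (2*s) := mul_pos hβE (by linarith only [hs])
      linarith only [h1, h2, hE]
    have key := Lf_key hTpos habs2 hu1
    rw [hE] at key
    have hLT : Lf T < -(β * E) :=
      (mul_lt_mul_iff_of_pos_right (by linarith only [hs] : (0:ℝ) < 2*s)).mp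
        (by linarith only [key] : Lf T * (2*s) < -(β*E) * (2*s))
    rw [← hL0] at hLT
    have hTT0 : T < T0 := by
      by_contra h
      push_neg at h
      rcases eq_or_lt_of_le h with h' | h'
      · rw [h'] at hLT; exact lt_irrefl _ hLT
      · exact absurd (Lf_mono hT0mem.1 h' (by linarith only [habs2, hu1]))
          (by linarith only [hLT])
    linarith only [hTT0, hTdef, hT0def]
  · intro hEpos
    have hβE : -(β * E) < 0 := neg_neg_of_pos (mul_pos hβ hEpos)
    have hTneg : T < 0 := by
      have h2 : -(β*E) * (2*s) < 0 :=
        mul_neg_of_neg_of_pos hβE (by linarith only [hs])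
      rcases lt_trichotomy T 0 with h | h | h
      · exact h
      · rw [h, zero_mul] at hE; linarith only [hE, h2]
      · have h1 : 0 < T * Lf (2*s) := mul_pos h hLu
        linarith only [h1, h2, hE]
    have key := Lf_key (by linarith only [hTneg] : (0:ℝ) < -T)
      (by linarith only [habs1] : -T < 2*s) hu1
    have hLneg : Lf (-T) = -Lf T := by
      have h1 : (1 + -T)/(1 - -T) = ((1+T)/(1-T))⁻¹ := by
        have e1 : (1:ℝ) + T ≠ 0 := by linarith only [habs1, hs, hu1]
        have e2 : (1:ℝ) - T ≠ 0 := by linarith only [habs2, hu1]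
        rw [show (1:ℝ) + -T = 1 - T by ring, show (1:ℝ) - -T = 1 + T by ring]
        exact (inv_div _ _).symm
      rw [Lf, h1, Real.log_inv]; rfl
    rw [hLneg] at key
    have hLT : -(β * E) < Lf T :=
      (mul_lt_mul_iff_of_pos_right (by linarith only [hs] : (0:ℝ) < 2*s)).mp
        (by nlinarith only [key, hE] : -(β*E) * (2*s) < Lf T * (2*s))
    rw [← hL0] at hLT
    have hTT0 : T0 < T := by
      by_contra h
      push_neg at h
      rcases eq_or_lt_of_le h with h' | h'
      · rw [h'] at hLT; exact lt_irrefl _ hLT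
      · exact absurd (Lf_mono (by linarith only [habs1, hu1]) h' hT0mem.2)
          (by linarith only [hLT])
    linarith only [hTT0, hTdef, hT0def]
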